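/- For a tree T on n+1 vertices (n ≥ 1), the determinant of its distance matrix D(T) equals (-1)^n · n · 2^{n-1}. In particular, the determinant depends only on the number of vertices, not on the structure of the tree. -/

import Mathlib

open SimpleGraph Matrix Finset

set_option linter.unusedSectionVars false
set_option maxHeartbeats 1000000



-- Leaf existence in a finite tree with at least 2 vertices.
lemma gp_exists_leaf {n : ℕ} (hn : 1 ≤ n) (G : SimpleGraph (Fin (n+1)))
    (hG : G.Connected) (hac : G.IsAcyclic) :
    ∃ v u, G.Adj v u ∧ ∀ w, G.Adj v w → w = u := by
  classical
  have hT : G.IsTree := ⟨hG, hac⟩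
  have hedge : G.edgeFinset.card = n := by
    have := hT.card_edgeFinset
    simpa using this
  -- each vertex has positive degree
  have hpos : ∀ v : Fin (n+1), 0 < G.degree v := by
    intro v
    rw [G.degree_pos_iff_exists_adj]
    have hne : ∃ w : Fin (n+1), w ≠ v := by
      haveI : Nontrivial (Fin (n+1)) := Fin.nontrivial_iff_two_le.mpr (by omega)
      rcases exists_ne v with ⟨w, hw⟩
      exact ⟨w, hw⟩
    rcases hne with ⟨w, hw⟩
    obtain ⟨p⟩ := hG.preconnected v w
    cases p with
    | nil => exact absurd rfl hw.symm
    | cons h q => exact ⟨_, h⟩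
  -- some vertex has degree 1
  have hdeg1 : ∃ v : Fin (n+1), G.degree v = 1 := by
    by_contra hcon
    push_neg at hcon
    have h2 : ∀ v : Fin (n+1), 2 ≤ G.degree v := by
      intro v
      have := hpos v
      have := hcon v
      omega
    have hsum : ∑ v : Fin (n+1), G.degree v = 2 * n := by
      rw [G.sum_degrees_eq_twice_card_edges, hedge]
    have : 2 * (n + 1) ≤ ∑ v : Fin (n+1), G.degree v := by
      calc 2 * (n+1) = ∑ _v : Fin (n+1), 2 := by simp [mul_comm]
        _ ≤ _ := Finset.sum_le_sum fun v _ => h2 v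
    omega
  obtain ⟨v, hv⟩ := hdeg1
  rw [← G.card_neighborFinset_eq_degree, Finset.card_eq_one] at hv
  obtain ⟨u, hu⟩ := hv
  refine ⟨v, u, ?_, ?_⟩
  · have : u ∈ G.neighborFinset v := hu ▸ Finset.mem_singleton_self u
    simpa [SimpleGraph.mem_neighborFinset] using this
  · intro w hw
    have : w ∈ G.neighborFinset v := by simpa [SimpleGraph.mem_neighborFinset] using hw
    rw [hu, Finset.mem_singleton] at this
    exact this




section dists
variable {n : ℕ} {G : SimpleGraph (Fin (n+2))} (hG : G.Connected) (hac : G.IsAcyclic)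
  {v u : Fin (n+2)} (hadj : G.Adj v u) (huniq : ∀ w, G.Adj v w → w = u)

-- distance from the leaf
include hG hadj huniq in
lemma gp_dist_leaf (j : Fin (n+2)) (hj : j ≠ v) :
    G.dist v j = G.dist u j + 1 := by
  have h1 : G.dist v u = 1 := SimpleGraph.dist_eq_one_iff_adj.mpr hadj
  have le1 : G.dist v j ≤ G.dist u j + 1 := by
    have := hG.dist_triangle (u := v) (v := u) (w := j)
    omega
  have le2 : G.dist u j + 1 ≤ G.dist v j := by
    obtain ⟨p, hp, hlen⟩ := hG.exists_path_of_dist v j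
    cases p with
    | nil => exact absurd rfl hj.symm
    | @cons _ x _ h q =>
      have hx : x = u := huniq _ h
      have : G.dist u j ≤ q.length := hx ▸ SimpleGraph.dist_le q
      simp only [SimpleGraph.Walk.length_cons] at hlen
      omega
  omega

-- the leaf is not on any path between two other vertices
include hac hadj huniq in
lemma gp_leaf_not_mem_path {a b : Fin (n+2)} (ha : a ≠ v) (hb : b ≠ v)
    (p : G.Walk a b) (hp : p.IsPath) : v ∉ p.support := by
  intro hv
  have hspec := p.take_spec hv
  set q := p.takeUntil v hv with hq
  set r := p.dropUntil v hv with hr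
  -- u occurs in q.support
  have hqp : q.IsPath := hp.takeUntil hv
  have hrp : r.IsPath := hp.dropUntil hv
  have huq : u ∈ q.support := by
    have hqr : q.reverse.IsPath := hqp.reverse
    rcases hqrev : q.reverse with _ | @⟨_, x, _, h, s⟩
    · exact absurd rfl ha
    · have hx : x = u := huniq _ h
      have : x ∈ q.reverse.support := by
        rw [hqrev]; simp [SimpleGraph.Walk.support_cons]
      rw [SimpleGraph.Walk.support_reverse, List.mem_reverse] at this
      exact hx ▸ this
  have hur : u ∈ r.support.tail := by
    rcases hrr : r with _ | @⟨_, x, _, h, s⟩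
    · exact absurd rfl hb.symm
    · have hx : x = u := huniq _ h
      simp only [SimpleGraph.Walk.support_cons, List.tail_cons]
      exact hx ▸ s.start_mem_support
  have hnodup : (q.support ++ r.support.tail).Nodup := by
    have := hp.support_nodup
    rw [← hspec, SimpleGraph.Walk.support_append] at this
    exact this
  rw [List.nodup_append] at hnodup
  exact hnodup.2.2 u huq u hur rfl

end dists


section comap
variable {n : ℕ} {G : SimpleGraph (Fin (n+2))} {v : Fin (n+2)}

-- lift a walk avoiding v to the comap graph
lemma gp_lift_walk {a b : Fin (n+2)} (p : G.Walk a b) (hs : v ∉ p.support) :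
    ∀ (i j : Fin (n+1)), v.succAbove i = a → v.succAbove j = b →
      ∃ q : (G.comap v.succAbove).Walk i j, q.length = p.length := by
  induction p with
  | nil =>
    intro i j hi hj
    have : i = j := Fin.succAbove_right_injective (p := v) (hi.trans hj.symm)
    subst this
    exact ⟨SimpleGraph.Walk.nil, rfl⟩
  | @cons a c b h p ih =>
    intro i j hi hj
    have hc : c ≠ v := by
      intro hcv
      apply hs
      subst hcv
      simp [SimpleGraph.Walk.support_cons]
    obtain ⟨m, hm⟩ := Fin.exists_succAbove_eq hc
    have hs' : v ∉ p.support := fun hmem => hs (by simp [SimpleGraph.Walk.support_cons, hmem])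
    obtain ⟨q, hq⟩ := ih hs' m j hm hj
    have hadj : (G.comap v.succAbove).Adj i m := by
      show G.Adj (v.succAbove i) (v.succAbove m)
      rw [hi, hm]; exact h
    exact ⟨SimpleGraph.Walk.cons hadj q, by simp [hq]⟩

variable (hG : G.Connected) (hac : G.IsAcyclic)
  {u : Fin (n+2)} (hadj : G.Adj v u) (huniq : ∀ w, G.Adj v w → w = u)

/-- homomorphism from the comap graph into G -/
def gpHom (G : SimpleGraph (Fin (n+2))) (v : Fin (n+2)) :
    G.comap v.succAbove →g G := ⟨v.succAbove, fun {_ _} h => h⟩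

include hG hac hadj huniq in
lemma gp_comap_connected : (G.comap v.succAbove).Connected := by
  constructor
  intro i j
  obtain ⟨p, hp, _⟩ := hG.exists_path_of_dist (v.succAbove i) (v.succAbove j)
  have hs : v ∉ p.support :=
    gp_leaf_not_mem_path hac hadj huniq (Fin.succAbove_ne v i) (Fin.succAbove_ne v j) p hp
  obtain ⟨q, _⟩ := gp_lift_walk p hs i j rfl rfl
  exact ⟨q⟩

include hac in
lemma gp_comap_acyclic : (G.comap v.succAbove).IsAcyclic := by
  intro i c hc
  exact hac (c.map (gpHom G v))
    (hc.map (f := gpHom G v) (Fin.succAbove_right_injective))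

include hG hac hadj huniq in
lemma gp_comap_dist (i j : Fin (n+1)) :
    (G.comap v.succAbove).dist i j = G.dist (v.succAbove i) (v.succAbove j) := by
  have hG' := gp_comap_connected hG hac hadj huniq
  apply le_antisymm
  · obtain ⟨p, hp, hlen⟩ := hG.exists_path_of_dist (v.succAbove i) (v.succAbove j)
    have hs : v ∉ p.support :=
      gp_leaf_not_mem_path hac hadj huniq (Fin.succAbove_ne v i) (Fin.succAbove_ne v j) p hp
    obtain ⟨q, hq⟩ := gp_lift_walk p hs i j rfl rfl
    calc (G.comap v.succAbove).dist i j ≤ q.length := SimpleGraph.dist_le q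
      _ = G.dist _ _ := by rw [hq, hlen]
  · obtain ⟨q, _, hlen⟩ := hG'.exists_path_of_dist i j
    calc G.dist (v.succAbove i) (v.succAbove j) ≤ (q.map (gpHom G v)).length :=
          SimpleGraph.dist_le _
      _ = (G.comap v.succAbove).dist i j := by rw [SimpleGraph.Walk.length_map, hlen]

end comap


section key

lemma gp_key (n : ℕ) (hn : 1 ≤ n) :
    ∀ G : SimpleGraph (Fin (n+1)), G.Connected → G.IsAcyclic →
    (Matrix.det (Matrix.of fun i j => (G.dist i j : ℤ)) =
        (-1 : ℤ) ^ n * (n : ℤ) * 2 ^ (n - 1)) ∧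
    ∃ δ : Fin (n+1) → ℤ, (∀ i : Fin (n+1), ∑ j, (G.dist i j : ℤ) * δ j = (n : ℤ)) ∧
      (∑ j, δ j = 2) := by
  induction n, hn using Nat.le_induction with
  | base =>
    intro G hG hac
    have h01 : G.Adj 0 1 := by
      have hne : (0 : Fin 2) ≠ 1 := by decide
      obtain ⟨p, hp, hlen⟩ := hG.exists_path_of_dist 0 1
      cases p with
      | @cons _ x _ h q =>
        have hx : x = 1 := by
          have hne0 := h.ne'
          fin_cases x
          · exact absurd rfl hne0
          · rfl
        exact hx ▸ h
    have hd01 : G.dist 0 1 = 1 := SimpleGraph.dist_eq_one_iff_adj.mpr h01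
    have hd10 : G.dist 1 0 = 1 := by rw [SimpleGraph.dist_comm]; exact hd01
    constructor
    · have hM : (Matrix.of fun i j => (G.dist i j : ℤ)) = !![0, 1; 1, 0] := by
        ext i j
        fin_cases i <;> fin_cases j <;>
          simp [SimpleGraph.dist_self, hd01, hd10]
      rw [hM, Matrix.det_fin_two_of]
      norm_num
    · refine ⟨fun _ => 1, ?_, by simp⟩
      intro i
      rw [Fin.sum_univ_two]
      fin_cases i <;> simp [SimpleGraph.dist_self, hd01, hd10]
  | succ n hn ih =>
    intro G hG hac
    obtain ⟨v, u, hadj, huniq⟩ := gp_exists_leaf (n := n+1) (by omega) G hG hac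
    set f := v.succAbove with hf
    obtain ⟨k, hk0⟩ := Fin.exists_succAbove_eq hadj.ne'
    have hk : f k = u := by rw [hf]; exact hk0
    have hG' := gp_comap_connected hG hac hadj huniq
    have hac' := gp_comap_acyclic (v := v) hac
    obtain ⟨hdetA, δ', hδrow, hδsum⟩ := ih (G.comap f) hG' hac'
    set D : Matrix (Fin (n+2)) (Fin (n+2)) ℤ :=
      Matrix.of fun i j => (G.dist i j : ℤ) with hD
    set A : Matrix (Fin (n+1)) (Fin (n+1)) ℤ :=
      Matrix.of fun i j => ((G.comap f).dist i j : ℤ) with hAdef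
    have hArow : ∀ i, ∑ j, A i j * δ' j = (n : ℤ) := hδrow
    have hA : ∀ i j, A i j = (G.dist (f i) (f j) : ℤ) := by
      intro i j
      simp only [hAdef, Matrix.of_apply]
      exact_mod_cast congrArg (Nat.cast : ℕ → ℤ) (gp_comap_dist hG hac hadj huniq i j)
    have hAsymm : ∀ i j, A i j = A j i := by
      intro i j; rw [hA, hA, SimpleGraph.dist_comm]
    have hAkk : A k k = 0 := by
      simp [hAdef, SimpleGraph.dist_self]
    -- leaf distance facts
    have hvf : ∀ j, (G.dist v (f j) : ℤ) = A k j + 1 := by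
      intro j
      rw [hA, hk, gp_dist_leaf hG hadj huniq (f j) (Fin.succAbove_ne v j)]
      push_cast; ring
    have hfv : ∀ i, (G.dist (f i) v : ℤ) = A k i + 1 := by
      intro i
      rw [show G.dist (f i) v = G.dist v (f i) from SimpleGraph.dist_comm, hvf i]
    -- the reindexing equivalence
    set e : (Fin (n+1) ⊕ Fin 1) ≃ Fin (n+2) :=
      ((Equiv.refl (Fin (n+1))).sumCongr finOneEquiv).trans
        ((Equiv.optionEquivSumPUnit (Fin (n+1))).symm.trans (finSuccEquiv' v).symm) with he
    have he1 : ∀ i, e (Sum.inl i) = f i := by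
      intro i
      simp [he, Equiv.sumCongr_apply, Equiv.optionEquivSumPUnit_symm_inl, hf]
    have he2 : ∀ x, e (Sum.inr x) = v := by
      intro x
      simp [he, Equiv.sumCongr_apply, Equiv.optionEquivSumPUnit_symm_inr]
    -- blocks
    set B : Matrix (Fin (n+1)) (Fin 1) ℤ := Matrix.of fun i _ => A k i + 1 with hB
    set C : Matrix (Fin 1) (Fin (n+1)) ℤ := Matrix.of fun _ j => A k j + 1 with hC
    set N : Matrix (Fin (n+1) ⊕ Fin 1) (Fin (n+1) ⊕ Fin 1) ℤ := D.submatrix e e with hNdef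
    have hN : N = Matrix.fromBlocks A B C 0 := by
      ext x y
      rcases x with i | x <;> rcases y with j | y <;>
        simp only [hNdef, Matrix.submatrix_apply, he1, he2, Matrix.fromBlocks_apply₁₁,
          Matrix.fromBlocks_apply₁₂, Matrix.fromBlocks_apply₂₁, Matrix.fromBlocks_apply₂₂,
          Matrix.zero_apply, hB, hC, Matrix.of_apply, hD]
      · rw [hA]
      · exact hfv i
      · exact hvf j
      · simp [SimpleGraph.dist_self]
    -- elementary row/column operation matrix
    set c : Matrix (Fin 1) (Fin (n+1)) ℤ := Matrix.of fun _ j => if j = k then -1 else 0 with hc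
    set L : Matrix (Fin (n+1) ⊕ Fin 1) (Fin (n+1) ⊕ Fin 1) ℤ :=
      Matrix.fromBlocks 1 0 c 1 with hL
    have hLdet : L.det = 1 := by
      rw [hL, Matrix.det_fromBlocks_zero₁₂]
      simp
    have hLTdet : Lᵀ.det = 1 := by rw [Matrix.det_transpose]; exact hLdet
    set S : Matrix (Fin (n+1) ⊕ Fin 1) (Fin (n+1) ⊕ Fin 1) ℤ :=
      Matrix.fromBlocks A (Matrix.of fun _ _ => 1) (Matrix.of fun _ _ => 1)
        (Matrix.of fun _ _ => -2) with hSdef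
    have hS : L * N * Lᵀ = S := by
      rw [hN, hL, Matrix.fromBlocks_transpose, Matrix.fromBlocks_multiply,
        Matrix.fromBlocks_multiply, hSdef]
      have hcA : c * A = Matrix.of fun _ j => -A k j := by
        ext x j
        simp [hc, Matrix.mul_apply, ite_mul, Finset.sum_ite_eq']
      have hAcT : A * cᵀ = Matrix.of fun i _ => -A i k := by
        ext i x
        simp [hc, Matrix.mul_apply, mul_ite, Finset.sum_ite_eq']
      have hcB : c * B = Matrix.of fun _ _ => -1 := by
        ext x y
        simp [hc, hB, Matrix.mul_apply, ite_mul, Finset.sum_ite_eq', hAkk]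
      have hCA1 : c * A + C = Matrix.of fun _ _ => 1 := by
        rw [hcA]
        ext x j
        simp only [Matrix.add_apply, Matrix.of_apply, hC]
        ring
      congr 1
      · simp
      all_goals simp only [Matrix.one_mul, Matrix.mul_one, Matrix.zero_mul, Matrix.mul_zero,
        Matrix.transpose_one, Matrix.transpose_zero, add_zero, zero_add]
      · rw [hAcT]
        ext i x
        simp only [Matrix.add_apply, Matrix.of_apply, hB]
        rw [hAsymm i k]
        ring
      · exact hCA1
      · rw [hCA1, hcB]
        ext x y
        simp only [Matrix.add_apply, Matrix.mul_apply, Matrix.of_apply, hc,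
          Matrix.transpose_apply, mul_ite, mul_neg, mul_one, mul_zero,
          Finset.sum_ite_eq', Finset.mem_univ, if_true]
        ring
    have hdetSN : S.det = D.det := by
      rw [← hS, Matrix.det_mul, Matrix.det_mul, hLdet, hLTdet, one_mul, mul_one,
        hNdef, Matrix.det_submatrix_equiv_self]
    -- second operation
    set w : Matrix (Fin (n+1)) (Fin 1) ℤ := Matrix.of fun j _ => -δ' j with hw
    set U : Matrix (Fin (n+1) ⊕ Fin 1) (Fin (n+1) ⊕ Fin 1) ℤ :=
      Matrix.fromBlocks 1 w 0 (Matrix.of fun _ _ => (n : ℤ)) with hU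
    have hUdet : U.det = (n : ℤ) := by
      rw [hU, Matrix.det_fromBlocks_zero₂₁]
      simp [Matrix.det_fin_one]
    have hSU : S * U = Matrix.fromBlocks A 0 (Matrix.of fun _ _ => 1)
        (Matrix.of fun _ _ => (-2 * (n : ℤ) - 2)) := by
      rw [hSdef, hU, Matrix.fromBlocks_multiply]
      congr 1
      · simp
      · ext i x
        simp only [Matrix.add_apply, Matrix.mul_apply, Matrix.of_apply, hw, mul_neg,
          Fin.sum_univ_one, Matrix.zero_apply, mul_one, one_mul]
        have h := hArow i
        rw [Finset.sum_neg_distrib, h]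
        ring
      · simp
      · ext x y
        simp only [Matrix.add_apply, Matrix.mul_apply, Matrix.of_apply, hw, mul_neg,
          Fin.sum_univ_one, mul_one, one_mul]
        rw [Finset.sum_neg_distrib, hδsum]
        ring
    have hdet3 : D.det * (n : ℤ) = A.det * (-2 * (n : ℤ) - 2) := by
      have h1 : (S * U).det = S.det * U.det := Matrix.det_mul S U
      rw [hSU, Matrix.det_fromBlocks_zero₁₂, hUdet, hdetSN] at h1
      rw [← h1]
      congr 1
      simp [Matrix.det_fin_one]
    constructor
    · -- determinant computation
      have hn0 : (n : ℤ) ≠ 0 := Int.natCast_ne_zero.mpr (by omega)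
      apply mul_right_cancel₀ hn0
      rw [hdet3, hdetA]
      have hpow : (2 : ℤ) ^ n = 2 ^ (n - 1) * 2 := by
        rw [← pow_succ]
        congr 1
        omega
      have hsub : n + 1 - 1 = n := rfl
      rw [hsub]
      push_cast
      rw [pow_succ, hpow]
      ring
    · -- the delta vector
      refine ⟨fun x => Sum.elim (fun i => δ' i - if i = k then 1 else 0)
        (fun _ => (1:ℤ)) (e.symm x), ?_, ?_⟩
      · intro x
        obtain ⟨s, rfl⟩ := e.surjective x
        have hrw : ∀ y : Fin (n+2), (G.dist (e s) y : ℤ) = D (e s) y := fun y => rfl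
        rw [← Equiv.sum_comp e (fun y => (G.dist (e s) y : ℤ) *
          Sum.elim (fun i => δ' i - if i = k then 1 else 0) (fun _ => (1:ℤ)) (e.symm y))]
        simp only [Equiv.symm_apply_apply]
        rw [Fintype.sum_sum_type]
        rcases s with i | x
        · simp only [Sum.elim_inl, Sum.elim_inr, he1, he2]
          have hterm : ∀ j, (G.dist (f i) (f j) : ℤ) * (δ' j - if j = k then 1 else 0)
              = A i j * δ' j - (if j = k then A i j else 0) := by
            intro j
            rw [← hA]
            split <;> ring
          rw [Finset.sum_congr rfl fun j _ => hterm j, Finset.sum_sub_distrib,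
            Finset.sum_ite_eq' Finset.univ k (fun j => A i j)]
          simp only [Finset.mem_univ, if_true, Fin.sum_univ_one]
          rw [hArow i, hfv i, hAsymm i k]
          push_cast
          ring
        · simp only [Sum.elim_inl, Sum.elim_inr, he1, he2]
          have hterm : ∀ j, (G.dist v (f j) : ℤ) * (δ' j - if j = k then 1 else 0)
              = A k j * δ' j + δ' j - (if j = k then A k j + 1 else 0) := by
            intro j
            rw [hvf j]
            split <;> ring
          rw [Finset.sum_congr rfl fun j _ => hterm j, Finset.sum_sub_distrib,
            Finset.sum_add_distrib, Finset.sum_ite_eq' Finset.univ k (fun j => A k j + 1)]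
          simp only [Finset.mem_univ, if_true, Fin.sum_univ_one]
          rw [hArow k, hδsum, hAkk, show G.dist v v = 0 from SimpleGraph.dist_self]
          push_cast
          ring
      · rw [← Equiv.sum_comp e (fun y =>
          Sum.elim (fun i => δ' i - if i = k then 1 else 0) (fun _ => (1:ℤ)) (e.symm y))]
        simp only [Equiv.symm_apply_apply]
        rw [Fintype.sum_sum_type]
        simp only [Sum.elim_inl, Sum.elim_inr, Fin.sum_univ_one]
        rw [Finset.sum_sub_distrib, Finset.sum_ite_eq' Finset.univ k]
        simp [hδsum]

end key

theorem stmt_14 (n : ℕ) (hn : 1 ≤ n) (G : SimpleGraph (Fin (n+1)))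
    (hG : G.Connected) (hac : G.IsAcyclic) :
    Matrix.det (Matrix.of fun i j => (G.dist i j : ℤ)) =
      (-1 : ℤ) ^ n * (n : ℤ) * 2 ^ (n - 1) := by
  exact (gp_key n hn G hG hac).1
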